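/- Kernel of the Wolff state map: let S₁,…,S_{n−k} be a basis of a subspace S ≤ V = (𝔽₂²)ⁿ and 0 ≤ i ≤ n. The map fᵢ : S^⊥ → 𝔽₂^{n−k} defined by fᵢ(P) = (ω(Sⱼ, πᵢ(P)))_{j=1}^{n−k} is 𝔽₂-linear, its kernel equals Cᵢᵖ + Cᵢᶠ, and Cᵢᵖ ∩ Cᵢᶠ = {0} (so the kernel is the internal direct sum of the past and future subgroups). -/
import Mathlib


/-- `V = (𝔽₂²)ⁿ`, the additive group underlying the effective Pauli group `Gₙ`. -/
abbrev PV (n : ℕ) := Fin n → ZMod 2 × ZMod 2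

/-- The symplectic form `ω(v,w) = Σᵢ (aᵢb′ᵢ + a′ᵢbᵢ)` over `𝔽₂`. -/
def sympOmega {n : ℕ} (v w : PV n) : ZMod 2 :=
  ∑ i, ((v i).1 * (w i).2 + (w i).1 * (v i).2)

lemma sympOmega_add_left {n : ℕ} (a b w : PV n) :
    sympOmega (a + b) w = sympOmega a w + sympOmega b w := by
  unfold sympOmega
  rw [← Finset.sum_add_distrib]
  refine Finset.sum_congr rfl fun i _ => ?_
  simp [Prod.fst_add, Prod.snd_add, add_mul, mul_add]
  ring

lemma sympOmega_smul_left {n : ℕ} (c : ZMod 2) (a w : PV n) :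
    sympOmega (c • a) w = c * sympOmega a w := by
  unfold sympOmega
  rw [Finset.mul_sum]
  refine Finset.sum_congr rfl fun i _ => ?_
  simp [Prod.smul_fst, Prod.smul_snd, smul_eq_mul]
  ring

/-- The symplectic orthogonal `S^⊥ = {P ∈ V : ω(P,Q) = 0 for all Q ∈ S}`. -/
def sPerp {n : ℕ} (S : Submodule (ZMod 2) (PV n)) : Submodule (ZMod 2) (PV n) where
  carrier := {P | ∀ Q ∈ S, sympOmega P Q = 0}
  add_mem' := by
    intro a b ha hb Q hQ
    rw [sympOmega_add_left, ha Q hQ, hb Q hQ, add_zero]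
  zero_mem' := by
    intro Q hQ
    simp [sympOmega]
  smul_mem' := by
    intro c a ha Q hQ
    rw [sympOmega_smul_left, ha Q hQ, mul_zero]

/-- The truncation map `πᵢ : V → V`, `(P₁,…,Pₙ) ↦ (P₁,…,Pᵢ,0,…,0)`. -/
def trunc (n i : ℕ) : PV n →ₗ[ZMod 2] PV n where
  toFun v := fun j => if (j : ℕ) < i then v j else 0
  map_add' := by
    intro a b
    funext j
    by_cases h : (j : ℕ) < i <;> simp [h]
  map_smul' := by
    intro c a
    funext j
    by_cases h : (j : ℕ) < i <;> simp [h]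

lemma sympOmega_comm {n : ℕ} (v w : PV n) : sympOmega v w = sympOmega w v := by
  unfold sympOmega
  exact Finset.sum_congr rfl fun i _ => by ring

lemma sympOmega_zero_left {n : ℕ} (w : PV n) : sympOmega 0 w = 0 := by
  simp [sympOmega]

lemma trunc_idem {n i : ℕ} (v : PV n) : trunc n i (trunc n i v) = trunc n i v := by
  funext j
  by_cases h : (j : ℕ) < i <;> simp [trunc, h]

/-- Kernel of the Wolff state map fᵢ(P) = (ω(Sⱼ, πᵢ(P)))ⱼ on S^⊥: fᵢ is 𝔽₂-linear,
its kernel equals Cᵢᵖ + Cᵢᶠ, and Cᵢᵖ ∩ Cᵢᶠ = {0}. -/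
theorem wolff_state_map_kernel (n k : ℕ) (hk : k ≤ n)
    (S : Submodule (ZMod 2) (PV n))
    (Sgen : Fin (n - k) → PV n) (hind : LinearIndependent (ZMod 2) Sgen)
    (hspan : Submodule.span (ZMod 2) (Set.range Sgen) = S)
    (i : ℕ) (hi : i ≤ n) :
    IsLinearMap (ZMod 2)
      (fun (P : PV n) (j : Fin (n - k)) => sympOmega (Sgen j) (trunc n i P)) ∧
    {P : PV n | P ∈ sPerp S ∧
        (fun j : Fin (n - k) => sympOmega (Sgen j) (trunc n i P)) = 0}
      = ↑((sPerp S ⊓ LinearMap.ker (LinearMap.id - trunc n i))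
          ⊔ (sPerp S ⊓ LinearMap.ker (trunc n i))) ∧
    (sPerp S ⊓ LinearMap.ker (LinearMap.id - trunc n i))
        ⊓ (sPerp S ⊓ LinearMap.ker (trunc n i)) = ⊥ := by
  refine ⟨?_, ?_, ?_⟩
  · constructor
    · intro a b
      funext j
      rw [map_add, sympOmega_comm, sympOmega_add_left, Pi.add_apply,
        sympOmega_comm (trunc n i a), sympOmega_comm (trunc n i b)]
    · intro c a
      funext j
      rw [map_smul, sympOmega_comm, sympOmega_smul_left, Pi.smul_apply, smul_eq_mul,
        sympOmega_comm (trunc n i a)]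
  · ext P
    simp only [Set.mem_setOf_eq, SetLike.mem_coe]
    constructor
    · rintro ⟨hP, hf⟩
      have htP : trunc n i P ∈ sPerp S := by
        intro Q hQ
        rw [sympOmega_comm]
        rw [← hspan] at hQ
        induction hQ using Submodule.span_induction with
        | mem x hx =>
          obtain ⟨j, rfl⟩ := hx
          exact congrFun hf j
        | zero => exact sympOmega_zero_left _
        | add x y _ _ hx hy => rw [sympOmega_add_left, hx, hy, add_zero]
        | smul c x _ hx => rw [sympOmega_smul_left, hx, mul_zero]
      rw [Submodule.mem_sup]
      refine ⟨trunc n i P, ⟨htP, ?_⟩, P - trunc n i P, ⟨sub_mem hP htP, ?_⟩, by abel⟩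
      · simp [LinearMap.mem_ker, LinearMap.sub_apply, trunc_idem]
      · simp [LinearMap.mem_ker, map_sub, trunc_idem]
    · intro hP
      rw [Submodule.mem_sup] at hP
      obtain ⟨x, ⟨hxS, hxk⟩, y, ⟨hyS, hyk⟩, rfl⟩ := hP
      rw [SetLike.mem_coe, LinearMap.mem_ker, LinearMap.sub_apply, LinearMap.id_apply, sub_eq_zero] at hxk
      rw [SetLike.mem_coe, LinearMap.mem_ker] at hyk
      refine ⟨add_mem hxS hyS, ?_⟩
      funext j
      rw [Pi.zero_apply, map_add, hyk, add_zero, ← hxk, sympOmega_comm]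
      exact hxS (Sgen j) (hspan ▸ Submodule.subset_span ⟨j, rfl⟩)
  · rw [eq_bot_iff]
    rintro P ⟨⟨_, hP1⟩, ⟨_, hP2⟩⟩
    rw [SetLike.mem_coe, LinearMap.mem_ker, LinearMap.sub_apply, LinearMap.id_apply, sub_eq_zero] at hP1
    rw [SetLike.mem_coe, LinearMap.mem_ker] at hP2
    rw [Submodule.mem_bot, hP1, hP2]
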